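/- Powers of E_i act on the basis of V as follows. For i ∈ I, a root α not proportional to α_i, and an integer k ≥ 1: if k ≤ p_{i,α} then E_i^k X_α = ([q_{i,α}+k]_i!/[q_{i,α}]_i!)·X_{α+kα_i}, while if k > p_{i,α} then E_i^k X_α = 0. Moreover E_i^k X_{α_i} = 0 for all k ≥ 1; E_i² X_{−α_i} = [2]_i X_{α_i} and E_i^k X_{−α_i} = 0 for all k ≥ 3; and E_i^k t_j = 0 for all j ∈ I and k ≥ 2. -/

import Mathlib

open scoped RealInnerProductSpace

/-- A finite, reduced, irreducible, crystallographic root system `R` spanning a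
finite-dimensional real inner product space `E`, together with a base of simple
roots indexed by `I`, the integral Cartan pairing `pair`, and for each simple
root `αᵢ` and each root `α` not proportional to `αᵢ` the chain lengths
`p i α`, `q i α` (largest `n ≥ 0` with `α + n αᵢ`, resp. `α - n αᵢ`, a root). -/
structure RootSystemData (E : Type) [NormedAddCommGroup E] [InnerProductSpace ℝ E]
    [FiniteDimensional ℝ E] (I : Type) [Fintype I] : Type where
  R : Set E
  finite : R.Finite
  zero_not_mem : (0 : E) ∉ R
  spans : Submodule.span ℝ R = ⊤
  neg_mem : ∀ α ∈ R, -α ∈ R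
  reduced : ∀ α ∈ R, ∀ r : ℝ, r • α ∈ R → r = 1 ∨ r = -1
  pair : E → E → ℤ
  pair_def : ∀ α ∈ R, ∀ β ∈ R, (pair α β : ℝ) * ⟪α, α⟫ = 2 * ⟪α, β⟫
  reflect_mem : ∀ α ∈ R, ∀ β ∈ R, β - (pair α β : ℝ) • α ∈ R
  irreducible : ∀ R₁ R₂ : Set E, R = R₁ ∪ R₂ →
    (∀ α ∈ R₁, ∀ β ∈ R₂, ⟪α, β⟫ = 0) → R₁ = ∅ ∨ R₂ = ∅
  simple : I → E
  simple_mem : ∀ i, simple i ∈ R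
  simple_indep : LinearIndependent ℝ simple
  simple_gen : ∀ α ∈ R,
    (∃ c : I → ℕ, α = ∑ i, (c i : ℝ) • simple i) ∨
    (∃ c : I → ℕ, α = -(∑ i, (c i : ℝ) • simple i))
  p : I → E → ℕ
  q : I → E → ℕ
  p_mem : ∀ i, ∀ α ∈ R, (∀ r : ℝ, α ≠ r • simple i) →
    ∀ k : ℕ, k ≤ p i α → α + (k : ℝ) • simple i ∈ R
  p_max : ∀ i, ∀ α ∈ R, (∀ r : ℝ, α ≠ r • simple i) →
    α + ((p i α : ℝ) + 1) • simple i ∉ R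
  q_mem : ∀ i, ∀ α ∈ R, (∀ r : ℝ, α ≠ r • simple i) →
    ∀ k : ℕ, k ≤ q i α → α - (k : ℝ) • simple i ∈ R
  q_max : ∀ i, ∀ α ∈ R, (∀ r : ℝ, α ≠ r • simple i) →
    α - ((q i α : ℝ) + 1) • simple i ∉ R

noncomputable section

/-- The field `ℚ(v)` of rational functions in one variable `v` over `ℚ`. -/
abbrev K : Type := RatFunc ℚ

/-- The variable `v` of `ℚ(v)`. -/
def qv : K := RatFunc.X

/-- The quantum integer `[n]ᵢ = (vᵢⁿ - vᵢ⁻ⁿ)/(vᵢ - vᵢ⁻¹)` where `vᵢ = v^d`. -/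
def qnum (d : ℕ) (n : ℤ) : K :=
  ((qv ^ d) ^ n - (qv ^ d) ^ (-n)) / (qv ^ d - (qv ^ d)⁻¹)

/-- The quantum factorial `[n]ᵢ! = ∏_{s=1}^n [s]ᵢ` where `vᵢ = v^d`. -/
def qfact (d : ℕ) (n : ℕ) : K := ∏ s ∈ Finset.range n, qnum d ((s : ℤ) + 1)

variable {E : Type} [NormedAddCommGroup E] [InnerProductSpace ℝ E]
  [FiniteDimensional ℝ E] {I : Type} [Fintype I]

/-- The `ℚ(v)`-vector space `V` with basis `{X_α : α ∈ R} ∪ {t_i : i ∈ I}`. -/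
abbrev VV (D : RootSystemData E I) : Type := ({x : E // x ∈ D.R} ⊕ I) →₀ K

/-- The basis vector `X_α` of `V`, for a root `α`. -/
def XX (D : RootSystemData E I) (a : {x : E // x ∈ D.R}) : VV D :=
  Finsupp.single (Sum.inl a) 1

/-- The basis vector `t_j` of `V`, for `j ∈ I`. -/
def tv (D : RootSystemData E I) (j : I) : VV D :=
  Finsupp.single (Sum.inr j) 1

open Classical in
/-- The operator `E_i` on `V`:  `E_i X_α = [q_{i,α}+1]ᵢ X_{α+αᵢ}` if `α+αᵢ ∈ R`,
`E_i X_{-αᵢ} = tᵢ`, `E_i X_α = 0` otherwise, and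
`E_i t_j = [|⟨αⱼ∨,αᵢ⟩|]ⱼ X_{αᵢ}`. -/
def Eop (D : RootSystemData E I) (d : I → ℕ) (i : I) : VV D →ₗ[K] VV D :=
  Finsupp.lift (VV D) K _ fun b =>
    match b with
    | Sum.inl a =>
        if h : (a : E) + D.simple i ∈ D.R then
          qnum (d i) ((D.q i (a : E) : ℤ) + 1) • XX D ⟨(a : E) + D.simple i, h⟩
        else if (a : E) = -(D.simple i) then tv D i
        else 0
    | Sum.inr j =>
        qnum (d j) |D.pair (D.simple j) (D.simple i)| •
          XX D ⟨D.simple i, D.simple_mem i⟩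

open Classical in
/-- The operator `F_i` on `V`:  `F_i X_α = [p_{i,α}+1]ᵢ X_{α-αᵢ}` if `α-αᵢ ∈ R`,
`F_i X_{αᵢ} = tᵢ`, `F_i X_α = 0` otherwise, and
`F_i t_j = [|⟨αⱼ∨,αᵢ⟩|]ⱼ X_{-αᵢ}`. -/
def Fop (D : RootSystemData E I) (d : I → ℕ) (i : I) : VV D →ₗ[K] VV D :=
  Finsupp.lift (VV D) K _ fun b =>
    match b with
    | Sum.inl a =>
        if h : (a : E) - D.simple i ∈ D.R then
          qnum (d i) ((D.p i (a : E) : ℤ) + 1) • XX D ⟨(a : E) - D.simple i, h⟩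
        else if (a : E) = D.simple i then tv D i
        else 0
    | Sum.inr j =>
        qnum (d j) |D.pair (D.simple j) (D.simple i)| •
          XX D ⟨-(D.simple i), D.neg_mem (D.simple i) (D.simple_mem i)⟩

section Aux

lemma qv_pow_ne_one (m : ℕ) (hm : m ≠ 0) : (qv : K) ^ m ≠ 1 := by
  intro h
  have h2 : (Polynomial.X : Polynomial ℚ) ^ m = 1 := by
    apply RatFunc.algebraMap_injective ℚ
    rw [map_pow, RatFunc.algebraMap_X, map_one]
    simpa [qv] using h
  have := congrArg Polynomial.natDegree h2
  simp [Polynomial.natDegree_X_pow, hm] at this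

lemma qv_ne_zero : (qv : K) ≠ 0 := RatFunc.X_ne_zero

lemma qvd_zpow_ne_one (d : ℕ) (hd : d ≠ 0) (m : ℤ) (hm : m ≠ 0) :
    ((qv : K) ^ d) ^ m ≠ 1 := by
  have hx : ((qv : K) ^ d) ≠ 0 := pow_ne_zero _ qv_ne_zero
  rcases lt_or_gt_of_ne hm with h | h
  · intro hone
    have : ((qv : K) ^ d) ^ (-m) = 1 := by
      rw [zpow_neg, hone, inv_one]
    rw [show -m = ((-m).toNat : ℤ) by omega, zpow_natCast, ← pow_mul] at this
    have hpos : d * (-m).toNat ≠ 0 := by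
      have : (-m).toNat ≠ 0 := by omega
      exact Nat.mul_ne_zero hd this
    exact qv_pow_ne_one _ hpos this
  · intro hone
    rw [show m = (m.toNat : ℤ) by omega, zpow_natCast, ← pow_mul] at hone
    have hpos : d * m.toNat ≠ 0 := by
      have : m.toNat ≠ 0 := by omega
      exact Nat.mul_ne_zero hd this
    exact qv_pow_ne_one _ hpos hone

lemma qnum_ne_zero (d : ℕ) (hd : d ≠ 0) (n : ℤ) (hn : 0 < n) : qnum d n ≠ 0 := by
  have hx : ((qv : K) ^ d) ≠ 0 := pow_ne_zero _ qv_ne_zero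
  apply div_ne_zero
  · intro h
    have h1 : ((qv : K) ^ d) ^ n = ((qv : K) ^ d) ^ (-n) := by linear_combination h
    have : ((qv : K) ^ d) ^ (2 * n) = 1 := by
      rw [two_mul, zpow_add₀ hx]
      nth_rewrite 2 [h1]
      rw [← zpow_add₀ hx, add_neg_cancel, zpow_zero]
    exact qvd_zpow_ne_one d hd (2 * n) (by omega) this
  · intro h
    have h1 : ((qv : K) ^ d) = ((qv : K) ^ d)⁻¹ := by linear_combination h
    have : ((qv : K) ^ d) ^ (2 : ℤ) = 1 := by
      rw [show (2:ℤ) = 1 + 1 by norm_num, zpow_add₀ hx, zpow_one]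
      nth_rewrite 2 [h1]
      exact mul_inv_cancel₀ hx
    exact qvd_zpow_ne_one d hd 2 (by omega) this

lemma qfact_ne_zero (d : ℕ) (hd : d ≠ 0) (n : ℕ) : qfact d n ≠ 0 := by
  apply Finset.prod_ne_zero_iff.2
  intro s _
  exact qnum_ne_zero d hd _ (by omega)

lemma qfact_div (d : ℕ) (hd : d ≠ 0) (q k : ℕ) :
    qfact d (q + k) / qfact d q = ∏ s ∈ Finset.range k, qnum d ((q : ℤ) + (s : ℤ) + 1) := by
  rw [qfact, Finset.prod_range_add, ← qfact]
  rw [mul_comm, mul_div_assoc, div_self (qfact_ne_zero d hd q), mul_one]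
  apply Finset.prod_congr rfl
  intro s _
  congr 1

variable (D : RootSystemData E I) (d : I → ℕ) (i : I)

open Classical in
lemma Eop_X (a : {x : E // x ∈ D.R}) :
    Eop D d i (XX D a) =
      if h : (a : E) + D.simple i ∈ D.R then
        qnum (d i) ((D.q i (a : E) : ℤ) + 1) • XX D ⟨(a : E) + D.simple i, h⟩
      else if (a : E) = -(D.simple i) then tv D i
      else 0 := by
  simp [Eop, XX, Finsupp.lift_apply, Finsupp.sum_single_index]

open Classical in
lemma Eop_X' (v : E) (hv : v ∈ D.R) :
    Eop D d i (XX D ⟨v, hv⟩) =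
      if h : v + D.simple i ∈ D.R then
        qnum (d i) ((D.q i v : ℤ) + 1) • XX D ⟨v + D.simple i, h⟩
      else if v = -(D.simple i) then tv D i
      else 0 :=
  Eop_X D d i ⟨v, hv⟩

open Classical in
lemma Eop_t (j : I) :
    Eop D d i (tv D j) =
      qnum (d j) |D.pair (D.simple j) (D.simple i)| • XX D ⟨D.simple i, D.simple_mem i⟩ := by
  simp [Eop, tv, Finsupp.lift_apply, Finsupp.sum_single_index]

lemma not_prop_shift {α : E} (hnp : ∀ r : ℝ, α ≠ r • D.simple i) (c r : ℝ) :
    α + c • D.simple i ≠ r • D.simple i := by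
  intro h
  exact hnp (r - c) (by rw [sub_smul]; exact eq_sub_of_add_eq h)

lemma not_prop_one {α : E} (hnp : ∀ r : ℝ, α ≠ r • D.simple i) (r : ℝ) :
    α + D.simple i ≠ r • D.simple i := by
  have := not_prop_shift D i hnp 1 r
  simpa using this

lemma q_step {α : E} (hα : α ∈ D.R) (hnp : ∀ r : ℝ, α ≠ r • D.simple i)
    (h1 : α + D.simple i ∈ D.R) :
    D.q i (α + D.simple i) = D.q i α + 1 := by
  have hβnp := not_prop_one D i hnp
  have hge : ¬ (D.q i (α + D.simple i) ≤ D.q i α) := by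
    intro hle
    apply D.q_max i (α + D.simple i) h1 hβnp
    have hmem : α - (D.q i (α + D.simple i) : ℝ) • D.simple i ∈ D.R :=
      D.q_mem i α hα hnp _ hle
    have heq : α + D.simple i - ((D.q i (α + D.simple i) : ℝ) + 1) • D.simple i
        = α - (D.q i (α + D.simple i) : ℝ) • D.simple i := by module
    rw [heq]; exact hmem
  have hle : ¬ (D.q i α + 2 ≤ D.q i (α + D.simple i)) := by
    intro hge2
    apply D.q_max i α hα hnp
    have hmem : α + D.simple i - ((D.q i α + 2 : ℕ) : ℝ) • D.simple i ∈ D.R :=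
      D.q_mem i (α + D.simple i) h1 hβnp _ hge2
    have heq : α + D.simple i - ((D.q i α + 2 : ℕ) : ℝ) • D.simple i
        = α - ((D.q i α : ℝ) + 1) • D.simple i := by push_cast; module
    rw [heq] at hmem; exact hmem
  omega

lemma p_step {α : E} (hα : α ∈ D.R) (hnp : ∀ r : ℝ, α ≠ r • D.simple i)
    (h1 : α + D.simple i ∈ D.R) :
    D.p i (α + D.simple i) + 1 = D.p i α := by
  have hβnp := not_prop_one D i hnp
  have hp1 : 1 ≤ D.p i α := by
    by_contra h0
    apply D.p_max i α hα hnp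
    have h0' : D.p i α = 0 := by omega
    rw [h0']
    have heq2 : α + (((0 : ℕ) : ℝ) + 1) • D.simple i = α + D.simple i := by
      push_cast; module
    rw [heq2]; exact h1
  have hle : ¬ (D.p i (α + D.simple i) + 2 ≤ D.p i α) := by
    intro hge2
    apply D.p_max i (α + D.simple i) h1 hβnp
    have hmem : α + ((D.p i (α + D.simple i) + 2 : ℕ) : ℝ) • D.simple i ∈ D.R :=
      D.p_mem i α hα hnp _ hge2
    have heq : α + ((D.p i (α + D.simple i) + 2 : ℕ) : ℝ) • D.simple i
        = α + D.simple i + ((D.p i (α + D.simple i) : ℝ) + 1) • D.simple i := by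
      push_cast; module
    rw [heq] at hmem; exact hmem
  have hge : ¬ (D.p i α ≤ D.p i (α + D.simple i)) := by
    intro hge'
    apply D.p_max i α hα hnp
    have hmem : α + D.simple i + ((D.p i α : ℕ) : ℝ) • D.simple i ∈ D.R :=
      D.p_mem i (α + D.simple i) h1 hβnp _ hge'
    have heq : α + D.simple i + ((D.p i α : ℕ) : ℝ) • D.simple i
        = α + ((D.p i α : ℝ) + 1) • D.simple i := by push_cast; module
    rw [heq] at hmem; exact hmem
  omega

lemma chain {α : E} (hα : α ∈ D.R) (hnp : ∀ r : ℝ, α ≠ r • D.simple i) :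
    ∀ k : ℕ, k ≤ D.p i α →
      D.q i (α + (k : ℝ) • D.simple i) = D.q i α + k ∧
      D.p i (α + (k : ℝ) • D.simple i) + k = D.p i α := by
  intro k
  induction k with
  | zero =>
    intro _
    have heq : α + ((0 : ℕ) : ℝ) • D.simple i = α := by push_cast; module
    rw [heq]; simp
  | succ k IH =>
    intro hk
    have hk' : k ≤ D.p i α := by omega
    obtain ⟨hq, hp⟩ := IH hk'
    have hβ : α + (k : ℝ) • D.simple i ∈ D.R := D.p_mem i α hα hnp k hk'
    have hβnp : ∀ r : ℝ, α + (k : ℝ) • D.simple i ≠ r • D.simple i :=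
      not_prop_shift D i hnp (k : ℝ)
    have heq : α + ((k + 1 : ℕ) : ℝ) • D.simple i
        = α + (k : ℝ) • D.simple i + D.simple i := by push_cast; module
    have hmem1 : α + (k : ℝ) • D.simple i + D.simple i ∈ D.R := by
      rw [← heq]; exact D.p_mem i α hα hnp (k + 1) hk
    constructor
    · rw [heq, q_step D i hβ hβnp hmem1, hq]
      omega
    · rw [heq]
      have := p_step D i hβ hβnp hmem1
      omega

lemma EopPow_X (a : {x : E // x ∈ D.R}) (hnp : ∀ r : ℝ, (a : E) ≠ r • D.simple i) (k : ℕ) :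
    (∀ _ : k ≤ D.p i (a : E), ∀ h : (a : E) + (k : ℝ) • D.simple i ∈ D.R,
      (Eop D d i ^ k) (XX D a) =
        (∏ s ∈ Finset.range k, qnum (d i) ((D.q i (a : E) : ℤ) + (s : ℤ) + 1)) •
          XX D ⟨(a : E) + (k : ℝ) • D.simple i, h⟩) ∧
    (D.p i (a : E) < k → (Eop D d i ^ k) (XX D a) = 0) := by
  induction k with
  | zero =>
    constructor
    · intro _ h
      have heq : ((⟨(a : E) + ((0 : ℕ) : ℝ) • D.simple i, h⟩ : {x : E // x ∈ D.R}) = a) :=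
        Subtype.ext (by push_cast; module)
      rw [heq, pow_zero, Module.End.one_apply, Finset.range_zero, Finset.prod_empty, one_smul]
    · intro h; omega
  | succ k IH =>
    constructor
    · intro hk h
      have hk' : k ≤ D.p i (a : E) := by omega
      have hmemk : (a : E) + (k : ℝ) • D.simple i ∈ D.R := D.p_mem i (a : E) a.2 hnp k hk'
      have heq : (a : E) + ((k + 1 : ℕ) : ℝ) • D.simple i
          = (a : E) + (k : ℝ) • D.simple i + D.simple i := by push_cast; module
      have hmem1 : (a : E) + (k : ℝ) • D.simple i + D.simple i ∈ D.R := by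
        rw [← heq]; exact h
      have e1 := (IH).1 hk' hmemk
      rw [pow_succ', Module.End.mul_apply, e1, map_smul,
        Eop_X' D d i _ hmemk, dif_pos hmem1, smul_smul]
      have hqk : D.q i ((a : E) + (k : ℝ) • D.simple i) = D.q i (a : E) + k :=
        (chain D i a.2 hnp k hk').1
      have hXeq : XX D ⟨(a : E) + (k : ℝ) • D.simple i + D.simple i, hmem1⟩
          = XX D ⟨(a : E) + ((k + 1 : ℕ) : ℝ) • D.simple i, h⟩ :=
        congrArg _ (Subtype.ext heq.symm)
      have hcast : ((D.q i (a : E) + k : ℕ) : ℤ) + 1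
          = (D.q i (a : E) : ℤ) + (k : ℤ) + 1 := by push_cast; ring
      rw [hXeq, Finset.prod_range_succ, hqk, hcast]
    · intro hlt
      by_cases hpk : D.p i (a : E) < k
      · rw [pow_succ', Module.End.mul_apply, (IH).2 hpk, map_zero]
      · have hpk' : D.p i (a : E) = k := by omega
        have hk' : k ≤ D.p i (a : E) := hpk'.ge
        have hmemk : (a : E) + (k : ℝ) • D.simple i ∈ D.R := D.p_mem i (a : E) a.2 hnp k hk'
        have e1 := (IH).1 hk' hmemk
        rw [pow_succ', Module.End.mul_apply, e1, map_smul, Eop_X' D d i _ hmemk]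
        have hβnp : ∀ r : ℝ, (a : E) + (k : ℝ) • D.simple i ≠ r • D.simple i :=
          not_prop_shift D i hnp (k : ℝ)
        have hp0 : D.p i ((a : E) + (k : ℝ) • D.simple i) = 0 := by
          have := (chain D i a.2 hnp k hk').2
          omega
        have hnot : ¬ ((a : E) + (k : ℝ) • D.simple i + D.simple i ∈ D.R) := by
          have := D.p_max i _ hmemk hβnp
          rw [hp0] at this
          simpa using this
        have hne : (a : E) + (k : ℝ) • D.simple i ≠ -(D.simple i) := by
          intro hB
          exact hβnp (-1) (by rw [hB]; module)
        rw [dif_neg hnot, if_neg hne, smul_zero]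

end Aux
/-- Action of powers of `E_i` on the basis of `V`: on `X_α` (`α` not
proportional to `αᵢ`) the `k`-th power gives `([q+k]ᵢ!/[q]ᵢ!)X_{α+kαᵢ}` for
`k ≤ p_{i,α}` and `0` for `k > p_{i,α}`; `E_i^k X_{αᵢ} = 0` for `k ≥ 1`;
`E_i² X_{-αᵢ} = [2]ᵢ X_{αᵢ}` and `E_i^k X_{-αᵢ} = 0` for `k ≥ 3`;
`E_i^k t_j = 0` for `k ≥ 2`. -/
theorem stmt13 {E : Type} [NormedAddCommGroup E] [InnerProductSpace ℝ E]
    [FiniteDimensional ℝ E] {I : Type} [Fintype I]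
    (D : RootSystemData E I) (d : I → ℕ)
    (hd : ∀ i, 2 * (d i : ℝ) = ⟪D.simple i, D.simple i⟫)
    (hd123 : ∀ i, d i = 1 ∨ d i = 2 ∨ d i = 3)
    (hnorm : ∀ β ∈ D.R, (2 : ℝ) ≤ ⟪β, β⟫)
    (i : I) :
    (∀ a : {x : E // x ∈ D.R}, (∀ r : ℝ, (a : E) ≠ r • D.simple i) →
      ∀ k : ℕ, 1 ≤ k →
        (k ≤ D.p i (a : E) →
          ∀ h : (a : E) + (k : ℝ) • D.simple i ∈ D.R,
            (Eop D d i ^ k) (XX D a)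
              = (qfact (d i) (D.q i (a : E) + k) / qfact (d i) (D.q i (a : E))) •
                  XX D ⟨(a : E) + (k : ℝ) • D.simple i, h⟩) ∧
        (D.p i (a : E) < k → (Eop D d i ^ k) (XX D a) = 0)) ∧
    (∀ k : ℕ, 1 ≤ k →
      (Eop D d i ^ k) (XX D ⟨D.simple i, D.simple_mem i⟩) = 0) ∧
    ((Eop D d i ^ 2) (XX D ⟨-(D.simple i), D.neg_mem (D.simple i) (D.simple_mem i)⟩)
        = qnum (d i) 2 • XX D ⟨D.simple i, D.simple_mem i⟩) ∧
    (∀ k : ℕ, 3 ≤ k →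
      (Eop D d i ^ k) (XX D ⟨-(D.simple i), D.neg_mem (D.simple i) (D.simple_mem i)⟩) = 0) ∧
    (∀ j : I, ∀ k : ℕ, 2 ≤ k → (Eop D d i ^ k) (tv D j) = 0) := by
  have hd0 : d i ≠ 0 := by rcases hd123 i with h|h|h <;> omega
  have hEai : Eop D d i (XX D ⟨D.simple i, D.simple_mem i⟩) = 0 := by
    rw [Eop_X' D d i _ (D.simple_mem i)]
    have hnot : ¬ (D.simple i + D.simple i ∈ D.R) := by
      intro hm
      have h2 : ((2:ℝ)) • D.simple i ∈ D.R := by rw [two_smul]; exact hm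
      rcases D.reduced (D.simple i) (D.simple_mem i) 2 h2 with h|h <;> norm_num at h
    have hne : D.simple i ≠ -(D.simple i) := by
      intro h
      apply D.zero_not_mem
      have h2 : (2:ℝ) • D.simple i = 0 := by
        rw [two_smul]; nth_rewrite 2 [h]; rw [add_neg_cancel]
      have h0 : D.simple i = 0 := by
        rcases smul_eq_zero.1 h2 with h'|h'
        · norm_num at h'
        · exact h'
      exact h0 ▸ D.simple_mem i
    rw [dif_neg hnot, if_neg hne]
  have hEmai : Eop D d i
      (XX D ⟨-(D.simple i), D.neg_mem (D.simple i) (D.simple_mem i)⟩) = tv D i := by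
    rw [Eop_X' D d i _ (D.neg_mem (D.simple i) (D.simple_mem i))]
    have hnot : ¬ (-(D.simple i) + D.simple i ∈ D.R) := by
      rw [neg_add_cancel]; exact D.zero_not_mem
    rw [dif_neg hnot, if_pos rfl]
  have hpair : D.pair (D.simple i) (D.simple i) = 2 := by
    have hip : ⟪D.simple i, D.simple i⟫ ≠ 0 := by
      rw [← hd i]
      rcases hd123 i with h|h|h <;> rw [h] <;> norm_num
    have h := D.pair_def (D.simple i) (D.simple_mem i) (D.simple i) (D.simple_mem i)
    have h2 : (D.pair (D.simple i) (D.simple i) : ℝ) = 2 := mul_right_cancel₀ hip h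
    exact_mod_cast h2
  have hE2 : (Eop D d i ^ 2)
      (XX D ⟨-(D.simple i), D.neg_mem (D.simple i) (D.simple_mem i)⟩)
      = qnum (d i) 2 • XX D ⟨D.simple i, D.simple_mem i⟩ := by
    rw [pow_two, Module.End.mul_apply, hEmai, Eop_t, hpair,
      (by norm_num : |(2:ℤ)| = 2)]
  have hE3 : (Eop D d i ^ 3)
      (XX D ⟨-(D.simple i), D.neg_mem (D.simple i) (D.simple_mem i)⟩) = 0 := by
    show (Eop D d i ^ (2+1)) _ = 0
    rw [pow_succ', Module.End.mul_apply, hE2, map_smul, hEai, smul_zero]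
  refine ⟨?_, ?_, hE2, ?_, ?_⟩
  · intro a hnp k _
    refine ⟨fun hk h => ?_, (EopPow_X D d i a hnp k).2⟩
    rw [qfact_div (d i) hd0]
    exact (EopPow_X D d i a hnp k).1 hk h
  · intro k hk
    obtain ⟨m, rfl⟩ : ∃ m, k = m + 1 := ⟨k - 1, by omega⟩
    rw [pow_succ, Module.End.mul_apply, hEai, map_zero]
  · intro k hk
    obtain ⟨m, rfl⟩ : ∃ m, k = m + 3 := ⟨k - 3, by omega⟩
    rw [pow_add, Module.End.mul_apply, hE3, map_zero]
  · intro j k hk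
    have hE2t : (Eop D d i ^ 2) (tv D j) = 0 := by
      rw [pow_two, Module.End.mul_apply, Eop_t, map_smul, hEai, smul_zero]
    obtain ⟨m, rfl⟩ : ∃ m, k = m + 2 := ⟨k - 2, by omega⟩
    rw [pow_add, Module.End.mul_apply, hE2t, map_zero]
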